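/- Let d = 3, k algebraically closed of characteristic p, and for α ∈ W(k) let φ_α be the σ-linear endomorphism of M = W(k)^6 (basis e_1,...,e_6) sending (e_1,...,e_6) to (e_2, p·e_3, p·e_1, e_5, e_6 + α·e_1, p·e_4). Let α₁, α₂ ∈ W(k) \ {0} be such that the F_{p³}-subspace of k generated by α₁ mod p differs from the F_{p³}-subspace generated by α₂ mod p. Then the Dieudonné modules (M, φ_{α₁}) and (M, φ_{α₂}) are not isomorphic. -/

import Mathlib

noncomputable section

/-- For `α ∈ W(k)`, the `σ`-linear endomorphism `φ_α` of `M = W(k)^6` sending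
`(e_1,…,e_6)` to `(e_2, p e_3, p e_1, e_5, e_6 + α e_1, p e_4)`. -/
noncomputable def phiAlpha (p : ℕ) [Fact p.Prime] (k : Type) [CommRing k]
    (α : WittVector p k) : (Fin 6 → WittVector p k) → (Fin 6 → WittVector p k) :=
  fun v => ![(p : WittVector p k) * WittVector.frobenius (v 2) +
                α * WittVector.frobenius (v 4),
             WittVector.frobenius (v 0),
             (p : WittVector p k) * WittVector.frobenius (v 1),
             (p : WittVector p k) * WittVector.frobenius (v 5),
             WittVector.frobenius (v 3),
             WittVector.frobenius (v 4)]

namespace Stmt17Aux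

open WittVector

set_option linter.unusedSectionVars false

variable {p : ℕ} [hp : Fact p.Prime] {k : Type} [Field k] [CharP k p]

local notation "W" => WittVector p k

lemma pmul_coeff_zero (x : W) : ((p : W) * x).coeff 0 = 0 := by
  rw [mul_comm, ← verschiebung_frobenius, verschiebung_coeff_zero]

lemma pmul_coeff_succ (x : W) (n : ℕ) :
    ((p : W) * x).coeff (n+1) = x.coeff n ^ p := by
  rw [mul_comm, ← verschiebung_frobenius, verschiebung_coeff_succ, coeff_frobenius_charP]

lemma ppow_inj {a b : k} (n : ℕ) (h : a ^ p ^ n = b ^ p ^ n) : a = b := by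
  have hinj : Function.Injective (_root_.frobenius k p) := frobenius_inj k p
  induction n with
  | zero => simpa using h
  | succ m ih =>
    apply ih
    apply hinj
    simpa [frobenius_def, pow_succ, pow_mul] using h

lemma pmul_inj (x y : W) (h : (p : W) * x = (p : W) * y) : x = y := by
  ext n
  have h2 := congrArg (fun z => WittVector.coeff z (n+1)) h
  simp only [pmul_coeff_succ] at h2
  exact ppow_inj 1 (by simpa using h2)

lemma pow_pow_pow_zero {a : k} (h : ((a ^ p) ^ p) ^ p = 0) : a = 0 := by
  have h1 : (a ^ p) ^ p = 0 := pow_eq_zero_iff hp.out.ne_zero |>.mp h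
  have h2 : a ^ p = 0 := pow_eq_zero_iff hp.out.ne_zero |>.mp h1
  exact pow_eq_zero_iff hp.out.ne_zero |>.mp h2

lemma frob3_eq_pmul (x : W)
    (h : frobenius (frobenius (frobenius x)) = (p : W) * x) : x = 0 := by
  have key : ∀ n, x.coeff n = 0 := by
    intro n
    induction n with
    | zero =>
      have h0 := congrArg (fun z => WittVector.coeff z 0) h
      simp only [coeff_frobenius_charP, pmul_coeff_zero] at h0
      exact pow_pow_pow_zero h0
    | succ m ih =>
      have h0 := congrArg (fun z => WittVector.coeff z (m+1)) h
      simp only [coeff_frobenius_charP, pmul_coeff_succ, ih,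
        zero_pow hp.out.ne_zero] at h0
      exact pow_pow_pow_zero h0
  ext n
  simp [key]

/-- `coeff 0` as a ring hom. -/
def π : W →+* k where
  toFun x := x.coeff 0
  map_one' := WittVector.one_coeff_zero p k
  map_zero' := WittVector.zero_coeff p k 0
  map_add' := WittVector.add_coeff_zero
  map_mul' := WittVector.mul_coeff_zero

lemma π_frob (x : W) : π (frobenius x) = (π x) ^ p := coeff_frobenius_charP (p := p) x 0

lemma π_pmul (x : W) : π ((p : W) * x) = 0 := pmul_coeff_zero x

lemma frob_pmul (x : W) : frobenius ((p : W) * x) = (p : W) * frobenius x := by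
  rw [map_mul, map_natCast]

-- component lemmas for phiAlpha

lemma phi_app0 (α : W) (v : Fin 6 → W) : phiAlpha p k α v 0 = (p : W) * frobenius (v 2) + α * frobenius (v 4) := rfl
lemma phi_app1 (α : W) (v : Fin 6 → W) : phiAlpha p k α v 1 = frobenius (v 0) := rfl
lemma phi_app2 (α : W) (v : Fin 6 → W) : phiAlpha p k α v 2 = (p : W) * frobenius (v 1) := rfl
lemma phi_app3 (α : W) (v : Fin 6 → W) : phiAlpha p k α v 3 = (p : W) * frobenius (v 5) := rfl
lemma phi_app4 (α : W) (v : Fin 6 → W) : phiAlpha p k α v 4 = frobenius (v 3) := rfl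
lemma phi_app5 (α : W) (v : Fin 6 → W) : phiAlpha p k α v 5 = frobenius (v 4) := rfl

lemma phi_single0 (α : W) : phiAlpha p k α (Pi.single 0 1 : Fin 6 → W) = (Pi.single 1 1 : Fin 6 → W) := by
  funext i; fin_cases i <;> (simp [phiAlpha, Pi.single_apply]; try rfl)

lemma phi_single1 (α : W) : phiAlpha p k α (Pi.single 1 1 : Fin 6 → W) = (p : W) • (Pi.single 2 1 : Fin 6 → W) := by
  funext i; fin_cases i <;> (simp [phiAlpha, Pi.single_apply]; try rfl)

lemma phi_single2 (α : W) : phiAlpha p k α (Pi.single 2 1 : Fin 6 → W) = (p : W) • (Pi.single 0 1 : Fin 6 → W) := by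
  funext i; fin_cases i <;> (simp [phiAlpha, Pi.single_apply]; try rfl)

lemma phi_single3 (α : W) : phiAlpha p k α (Pi.single 3 1 : Fin 6 → W) = (Pi.single 4 1 : Fin 6 → W) := by
  funext i; fin_cases i <;> (simp [phiAlpha, Pi.single_apply]; try rfl)

lemma phi_single4 (α : W) : phiAlpha p k α (Pi.single 4 1 : Fin 6 → W) = α • (Pi.single 0 1 : Fin 6 → W) + (Pi.single 5 1 : Fin 6 → W) := by
  funext i; fin_cases i <;> (simp [phiAlpha, Pi.single_apply]; try rfl)

lemma phi_single5 (α : W) : phiAlpha p k α (Pi.single 5 1 : Fin 6 → W) = (p : W) • (Pi.single 3 1 : Fin 6 → W) := by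
  funext i; fin_cases i <;> (simp [phiAlpha, Pi.single_apply]; try rfl)

lemma pow_p3 (x : k) : x ^ p ^ 3 = ((x ^ p) ^ p) ^ p := by
  rw [show p ^ 3 = p * p * p by ring, pow_mul, pow_mul]

lemma lin_eval (f : Module.End W (Fin 6 → W)) (w : Fin 6 → W) (i : Fin 6) :
    f w i = ∑ j, w j * f (Pi.single j 1) i := by
  have hw : w = ∑ j, (w j) • (Pi.single j 1 : Fin 6 → W) := by
    funext i
    simp [Finset.sum_apply, Pi.single_apply]
  conv_lhs => rw [hw]
  rw [map_sum]
  simp [Finset.sum_apply, smul_eq_mul]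

end Stmt17Aux

open WittVector Stmt17Aux

/-- For `d = 3` and `α₁, α₂ ∈ W(k) \ {0}` such that the `𝔽_{p³}`-subspace of
`k` generated by `α₁ mod p` differs from the one generated by `α₂ mod p`, the Dieudonné
modules `(M, φ_{α₁})` and `(M, φ_{α₂})` are not isomorphic. -/
theorem stmt17 (p : ℕ) [Fact p.Prime] (k : Type) [Field k] [CharP k p] [IsAlgClosed k]
    (α₁ α₂ : WittVector p k) (hα₁ : α₁ ≠ 0) (hα₂ : α₂ ≠ 0)
    (hsub : {z : k | ∃ y : k, y ^ (p ^ 3) = y ∧ z = y * α₁.coeff 0} ≠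
            {z : k | ∃ y : k, y ^ (p ^ 3) = y ∧ z = y * α₂.coeff 0}) :
    ¬ ∃ g : (Module.End (WittVector p k) (Fin 6 → WittVector p k))ˣ,
        ∀ v, (g : Module.End (WittVector p k) (Fin 6 → WittVector p k)) (phiAlpha p k α₁ v) =
          phiAlpha p k α₂ ((g : Module.End (WittVector p k) (Fin 6 → WittVector p k)) v) := by
  rintro ⟨g, hg⟩
  have hpne : p ≠ 0 := (Fact.out : p.Prime).ne_zero
  set f := (g : Module.End (WittVector p k) (Fin 6 → WittVector p k)) with hfdef
  set finv := ((g⁻¹ : (Module.End (WittVector p k) (Fin 6 → WittVector p k))ˣ) :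
      Module.End (WittVector p k) (Fin 6 → WittVector p k)) with hfinvdef
  have hmul : ∀ w, f (finv w) = w := by
    intro w
    rw [hfdef, hfinvdef, ← Module.End.mul_apply, Units.mul_inv, Module.End.one_apply]
  have hmul2 : ∀ w, finv (f w) = w := by
    intro w
    rw [hfdef, hfinvdef, ← Module.End.mul_apply, Units.inv_mul, Module.End.one_apply]
  have h0 := hg (Pi.single 0 1)
  rw [phi_single0] at h0
  have h1 := hg (Pi.single 1 1)
  rw [phi_single1, map_smul] at h1
  have h2 := hg (Pi.single 2 1)
  rw [phi_single2, map_smul] at h2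
  have h3 := hg (Pi.single 3 1)
  rw [phi_single3] at h3
  have h4 := hg (Pi.single 4 1)
  rw [phi_single4, map_add, map_smul] at h4
  have h5 := hg (Pi.single 5 1)
  rw [phi_single5, map_smul] at h5
  have E00 := congrFun h0 0
  rw [phi_app0] at E00
  have E01 := congrFun h0 1
  rw [phi_app1] at E01
  have E02 := congrFun h0 2
  rw [phi_app2] at E02
  have E03 := congrFun h0 3
  rw [phi_app3] at E03
  have E04 := congrFun h0 4
  rw [phi_app4] at E04
  have E05 := congrFun h0 5
  rw [phi_app5] at E05
  have E12 := congrFun h1 2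
  rw [phi_app2] at E12
  simp only [Pi.smul_apply, Pi.add_apply, smul_eq_mul] at E12
  have E13 := congrFun h1 3
  rw [phi_app3] at E13
  simp only [Pi.smul_apply, Pi.add_apply, smul_eq_mul] at E13
  have E14 := congrFun h1 4
  rw [phi_app4] at E14
  simp only [Pi.smul_apply, Pi.add_apply, smul_eq_mul] at E14
  have E15 := congrFun h1 5
  rw [phi_app5] at E15
  simp only [Pi.smul_apply, Pi.add_apply, smul_eq_mul] at E15
  have E20 := congrFun h2 0
  rw [phi_app0] at E20
  simp only [Pi.smul_apply, Pi.add_apply, smul_eq_mul] at E20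
  have E23 := congrFun h2 3
  rw [phi_app3] at E23
  simp only [Pi.smul_apply, Pi.add_apply, smul_eq_mul] at E23
  have E24 := congrFun h2 4
  rw [phi_app4] at E24
  simp only [Pi.smul_apply, Pi.add_apply, smul_eq_mul] at E24
  have E25 := congrFun h2 5
  rw [phi_app5] at E25
  simp only [Pi.smul_apply, Pi.add_apply, smul_eq_mul] at E25
  have E33 := congrFun h3 3
  rw [phi_app3] at E33
  have E34 := congrFun h3 4
  rw [phi_app4] at E34
  have E40 := congrFun h4 0
  rw [phi_app0] at E40
  simp only [Pi.smul_apply, Pi.add_apply, smul_eq_mul] at E40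
  have E45 := congrFun h4 5
  rw [phi_app5] at E45
  simp only [Pi.smul_apply, Pi.add_apply, smul_eq_mul] at E45
  have E51 := congrFun h5 1
  rw [phi_app1] at E51
  simp only [Pi.smul_apply, Pi.add_apply, smul_eq_mul] at E51
  have E53 := congrFun h5 3
  rw [phi_app3] at E53
  simp only [Pi.smul_apply, Pi.add_apply, smul_eq_mul] at E53
  have E54 := congrFun h5 4
  rw [phi_app4] at E54
  simp only [Pi.smul_apply, Pi.add_apply, smul_eq_mul] at E54
  -- vanishing of G50, G31, G42
  have h42 : f (Pi.single 2 1) 4 = WittVector.frobenius (WittVector.frobenius (f (Pi.single 0 1) 5)) := by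
    apply pmul_inj
    rw [E14, E03, frob_pmul]
  have h50 : f (Pi.single 0 1) 5 = 0 := by
    apply frob3_eq_pmul
    rw [← h42, ← E25]
  have h31 : f (Pi.single 1 1) 3 = 0 := by
    rw [E03, h50, map_zero, mul_zero]
  have h42z : f (Pi.single 2 1) 4 = 0 := by
    rw [h42, h50, map_zero, map_zero]
  -- vanishing of G30, G41
  have h30 : f (Pi.single 0 1) 3 = 0 := by
    apply frob3_eq_pmul
    rw [← E04, ← E15, frob_pmul, ← E23]
  have h41 : f (Pi.single 1 1) 4 = 0 := by
    rw [E04, h30, map_zero]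
  -- vanishing of G40, G51, G32
  have h32 : f (Pi.single 2 1) 3 = WittVector.frobenius (f (Pi.single 1 1) 5) := pmul_inj _ _ E13
  have h40 : f (Pi.single 0 1) 4 = 0 := by
    apply frob3_eq_pmul
    rw [← E05, ← h32, ← E24]
  have h51 : f (Pi.single 1 1) 5 = 0 := by
    rw [E05, h40, map_zero]
  have h32z : f (Pi.single 2 1) 3 = 0 := by
    rw [h32, h51, map_zero]
  -- G00 is σ³-fixed
  have h22 : f (Pi.single 2 1) 2 = WittVector.frobenius (f (Pi.single 1 1) 1) := pmul_inj _ _ E12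
  have h00 : f (Pi.single 0 1) 0 =
      WittVector.frobenius (WittVector.frobenius (WittVector.frobenius (f (Pi.single 0 1) 0))) := by
    apply pmul_inj
    rw [E20, h42z, map_zero, mul_zero, add_zero, h22, E01]
  -- G33 is σ³-fixed
  have h55 : f (Pi.single 5 1) 5 = WittVector.frobenius (f (Pi.single 4 1) 4) := by
    rw [← E45, h50, mul_zero, zero_add]
  have h33 : f (Pi.single 3 1) 3 =
      WittVector.frobenius (WittVector.frobenius (WittVector.frobenius (f (Pi.single 3 1) 3))) := by
    apply pmul_inj
    rw [E53, h55, E34]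
  -- pass to coefficients
  have ha3 : π (f (Pi.single 0 1) 0) = ((π (f (Pi.single 0 1) 0) ^ p) ^ p) ^ p := by
    simpa only [π_frob] using congrArg π h00
  have hc3 : π (f (Pi.single 3 1) 3) = ((π (f (Pi.single 3 1) 3) ^ p) ^ p) ^ p := by
    simpa only [π_frob] using congrArg π h33
  have h05π : π (f (Pi.single 5 1) 0) = 0 := by
    have e := congrArg π E51
    rw [π_pmul, π_frob] at e
    exact (pow_eq_zero_iff hpne).mp e.symm
  have h43π : π (f (Pi.single 4 1) 3) = 0 := by
    have e := congrArg π E33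
    rw [π_pmul] at e
    exact e
  have h53π : π (f (Pi.single 5 1) 3) = 0 := by
    have e := congrArg π E54
    rw [π_pmul, π_frob] at e
    exact (pow_eq_zero_iff hpne).mp e.symm
  have h01π : π (f (Pi.single 1 1) 0) = 0 := by
    have e := congrArg π E00
    rw [h40, map_zero, mul_zero, add_zero, π_pmul] at e
    exact e
  have h21π : π (f (Pi.single 1 1) 2) = 0 := by
    have e := congrArg π E02
    rw [π_pmul] at e
    exact e
  have h11π : π (f (Pi.single 1 1) 1) = π (f (Pi.single 0 1) 0) ^ p := by
    have e := congrArg π E01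
    rw [π_frob] at e
    exact e
  -- the key coupling relation
  rw [E34] at E40
  have key : π α₁ * π (f (Pi.single 0 1) 0) = π α₂ * ((π (f (Pi.single 3 1) 3) ^ p) ^ p) := by
    have e := congrArg π E40
    rw [map_add, map_add, π_pmul, h05π, add_zero, zero_add] at e
    rw [map_mul, map_mul, π_frob, π_frob] at e
    exact e
  -- nonvanishing of c = π G33
  have hrow3 := congrFun (hmul (Pi.single 3 1)) 3
  rw [lin_eval] at hrow3
  have hc0 := congrArg π hrow3
  rw [Fin.sum_univ_six] at hc0
  simp only [map_add, map_mul, h30, h31, h32z, map_zero, mul_zero, zero_add, add_zero,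
    h43π, h53π, Pi.single_eq_same, map_one] at hc0
  have hc : π (f (Pi.single 3 1) 3) ≠ 0 := by
    intro hzero
    rw [hzero, mul_zero] at hc0
    exact one_ne_zero hc0.symm
  -- nonvanishing of a = π G00
  have hrow1 := congrFun (hmul2 (Pi.single 1 1)) 1
  rw [lin_eval] at hrow1
  have ha0 := congrArg π hrow1
  rw [Fin.sum_univ_six] at ha0
  simp only [map_add, map_mul, h31, h41, h51, map_zero, zero_mul, mul_zero, zero_add, add_zero,
    h01π, h21π, h11π, Pi.single_eq_same, map_one] at ha0
  have ha : π (f (Pi.single 0 1) 0) ≠ 0 := by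
    intro hzero
    rw [hzero, zero_pow hpne, zero_mul] at ha0
    exact one_ne_zero ha0.symm
  -- assemble the contradiction
  set a := π (f (Pi.single 0 1) 0) with hadef
  set c := π (f (Pi.single 3 1) 3) with hcdef
  have hap : a ^ p ^ 3 = a := by
    rw [pow_p3]
    exact ha3.symm
  have hcp : c ^ p ^ 3 = c := by
    rw [pow_p3]
    exact hc3.symm
  set lam := c ^ p ^ 2 / a with hlamdef
  have hlam_ne : lam ≠ 0 := div_ne_zero (pow_ne_zero _ hc) ha
  have hnum : (c ^ p ^ 2) ^ p ^ 3 = c ^ p ^ 2 := by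
    rw [← pow_mul, mul_comm, pow_mul, hcp]
  have hlam_pow : lam ^ p ^ 3 = lam := by
    rw [hlamdef, div_pow, hnum, hap]
  have key' : π α₁ * a = π α₂ * c ^ p ^ 2 := by
    rw [key]
    congr 1
    rw [← pow_mul, ← sq]
  have heqc : α₁.coeff 0 = lam * α₂.coeff 0 := by
    show π α₁ = lam * π α₂
    rw [hlamdef, div_mul_eq_mul_div, eq_div_iff ha, mul_comm (c ^ p ^ 2) (π α₂)]
    exact key'
  apply hsub
  ext z
  simp only [Set.mem_setOf_eq]
  constructor
  · rintro ⟨y, hy, rfl⟩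
    refine ⟨y * lam, ?_, ?_⟩
    · rw [mul_pow, hy, hlam_pow]
    · rw [heqc]
      ring
  · rintro ⟨y, hy, rfl⟩
    refine ⟨y * lam⁻¹, ?_, ?_⟩
    · rw [mul_pow, hy, inv_pow, hlam_pow]
    · rw [heqc]
      field_simp
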